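/- Let (Ω,F,P) be a probability space, (E,𝔈) a measurable space, X, Xₙ : Ω → E measurable, and 𝔖 ⊆ 𝔈 such that for every A ∈ 𝔈 and ε > 0 there exists S ∈ 𝔖 with P_X(A Δ S) < ε. Then the following are equivalent: (1) lim P(X ∈ S, Xₙ ∉ S) = 0 for all S ∈ 𝔖 and lim P(Xₙ ∈ A) = P(X ∈ A) for all A ∈ 𝔈; (2) lim E|f(X) − f(Xₙ)| = 0 for every bounded measurable f : E → ℝ. -/

import Mathlib

open MeasureTheory Filter Topology
open scoped ENNReal symmDiff

lemma lemA {Ω E : Type*} [MeasurableSpace Ω] [MeasurableSpace E]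
    (P : Measure Ω) [IsProbabilityMeasure P]
    (X : Ω → E) (Xn : ℕ → Ω → E)
    (𝔖 : Set (Set E)) (h𝔖meas : ∀ S ∈ 𝔖, MeasurableSet S)
    (happrox : ∀ A : Set E, MeasurableSet A → ∀ ε : ℝ≥0∞, 0 < ε →
      ∃ S ∈ 𝔖, P (X ⁻¹' (symmDiff A S)) < ε)
    (h1 : ∀ S ∈ 𝔖, Tendsto (fun n => P (X ⁻¹' S ∩ Xn n ⁻¹' Sᶜ)) atTop (𝓝 0))
    (h2 : ∀ A : Set E, MeasurableSet A →
        Tendsto (fun n => P (Xn n ⁻¹' A)) atTop (𝓝 (P (X ⁻¹' A))))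
    (A : Set E) (hA : MeasurableSet A) :
    Tendsto (fun n => P (X ⁻¹' A ∩ Xn n ⁻¹' Aᶜ)) atTop (𝓝 0) := by
  rw [ENNReal.tendsto_nhds_zero]
  intro ε hε
  set δ : ℝ≥0∞ := min ε 1 / 4 with hδdef
  have hδpos : 0 < δ := ENNReal.div_pos (ne_of_gt (lt_min hε zero_lt_one)) (by norm_num)
  have hδtop : δ ≠ ∞ := by
    refine ne_top_of_le_ne_top (b := (1:ℝ≥0∞)/4) ?_ ?_
    · norm_num
    · exact ENNReal.div_le_div_right (min_le_right _ _) _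
  have h4δ : δ + (δ + (δ + δ)) ≤ ε := by
    have : δ + (δ + (δ + δ)) = 4 * δ := by ring
    rw [this, hδdef, ENNReal.mul_div_cancel' (by norm_num) (by norm_num)]
    exact min_le_left _ _
  obtain ⟨S, hS𝔖, hPS⟩ := happrox A hA δ hδpos
  have hASsub : A \ S ⊆ A ∆ S := by rw [symmDiff_def]; exact Set.subset_union_left
  have hSAsub : S \ A ⊆ A ∆ S := by rw [symmDiff_def]; exact Set.subset_union_right
  have hAS : P (X ⁻¹' (A \ S)) ≤ δ :=
    le_of_lt (lt_of_le_of_lt (measure_mono (Set.preimage_mono hASsub)) hPS)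
  have hSA : P (X ⁻¹' (S \ A)) ≤ δ :=
    le_of_lt (lt_of_le_of_lt (measure_mono (Set.preimage_mono hSAsub)) hPS)
  have ev1 : ∀ᶠ n in atTop, P (X ⁻¹' S ∩ Xn n ⁻¹' Sᶜ) ≤ δ :=
    (ENNReal.tendsto_nhds_zero.1 (h1 S hS𝔖)) δ hδpos
  have hlt : P (X ⁻¹' (S \ A)) < δ + δ :=
    lt_of_le_of_lt hSA (ENNReal.lt_add_right hδtop hδpos.ne')
  have ev2 : ∀ᶠ n in atTop, P (Xn n ⁻¹' (S \ A)) < δ + δ :=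
    (h2 (S \ A) ((h𝔖meas S hS𝔖).diff hA)).eventually_lt_const hlt
  filter_upwards [ev1, ev2] with n hn1 hn2
  have hsub : X ⁻¹' A ∩ Xn n ⁻¹' Aᶜ ⊆
      X ⁻¹' (A \ S) ∪ ((X ⁻¹' S ∩ Xn n ⁻¹' Sᶜ) ∪ Xn n ⁻¹' (S \ A)) := by
    rintro ω ⟨hXA, hXnA⟩
    by_cases hXS : X ω ∈ S
    · by_cases hXnS : Xn n ω ∈ S
      · exact Or.inr (Or.inr ⟨hXnS, hXnA⟩)
      · exact Or.inr (Or.inl ⟨hXS, hXnS⟩)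
    · exact Or.inl ⟨hXA, hXS⟩
  calc P (X ⁻¹' A ∩ Xn n ⁻¹' Aᶜ)
      ≤ P (X ⁻¹' (A \ S) ∪ ((X ⁻¹' S ∩ Xn n ⁻¹' Sᶜ) ∪ Xn n ⁻¹' (S \ A))) := measure_mono hsub
    _ ≤ P (X ⁻¹' (A \ S)) + (P (X ⁻¹' S ∩ Xn n ⁻¹' Sᶜ) + P (Xn n ⁻¹' (S \ A))) :=
        (measure_union_le _ _).trans (add_le_add le_rfl (measure_union_le _ _))
    _ ≤ δ + (δ + (δ + δ)) := add_le_add hAS (add_le_add hn1 (le_of_lt hn2))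
    _ ≤ ε := h4δ

lemma lemB {Ω E : Type*} [MeasurableSpace Ω] [MeasurableSpace E]
    (P : Measure Ω) [IsProbabilityMeasure P]
    (X : Ω → E) (Xn : ℕ → Ω → E) (hX : Measurable X) (hXn : ∀ n, Measurable (Xn n))
    (hAll : ∀ A : Set E, MeasurableSet A →
      Tendsto (fun n => P (X ⁻¹' A ∩ Xn n ⁻¹' Aᶜ)) atTop (𝓝 0))
    (f : E → ℝ) (hf : Measurable f) (C : ℝ) (hC : ∀ x, |f x| ≤ C) :
    Tendsto (fun n => ∫ ω, |f (X ω) - f (Xn n ω)| ∂P) atTop (𝓝 0) := by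
  have hΩ : Nonempty Ω := by
    by_contra h
    rw [not_nonempty_iff] at h
    have h1 : P Set.univ = 1 := measure_univ
    rw [Set.univ_eq_empty_iff.2 h] at h1
    simp at h1
  have hC0 : 0 ≤ C := le_trans (abs_nonneg _) (hC (X (Classical.arbitrary Ω)))
  have hint : ∀ n, Integrable (fun ω => |f (X ω) - f (Xn n ω)|) P := by
    intro n
    refine (integrable_const (2*C)).mono'
      ((hf.comp hX).sub (hf.comp (hXn n))).abs.aestronglyMeasurable (ae_of_all _ fun ω => ?_)
    rw [Real.norm_eq_abs, abs_abs]
    calc |f (X ω) - f (Xn n ω)| ≤ |f (X ω)| + |f (Xn n ω)| := abs_sub _ _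
      _ ≤ C + C := add_le_add (hC _) (hC _)
      _ = 2*C := by ring
  rw [Metric.tendsto_atTop]
  intro ε hε
  set δ : ℝ := ε/2 with hδdef
  have hδpos : 0 < δ := by positivity
  set J : E → ℤ := fun x => ⌊f x / δ⌋ with hJ
  have hJmeas : Measurable J := (hf.div_const δ).floor
  set bad : ℕ → Set Ω := fun n => {ω | ¬ J (X ω) = J (Xn n ω)} with hbad
  have hbadmeas : ∀ n, MeasurableSet (bad n) :=
    fun n => (measurableSet_eq_fun (hJmeas.comp hX) (hJmeas.comp (hXn n))).compl
  have hpt : ∀ n ω, |f (X ω) - f (Xn n ω)| ≤ δ + Set.indicator (bad n) (fun _ => 2*C) ω := by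
    intro n ω
    by_cases h : J (X ω) = J (Xn n ω)
    · have hω : ω ∉ bad n := by simp [hbad, h]
      rw [Set.indicator_of_notMem hω, add_zero]
      have key : ∀ y : E, J y = J (X ω) → (J (X ω) : ℝ) * δ ≤ f y ∧ f y < ((J (X ω) : ℝ) + 1) * δ := by
        intro y hy
        constructor
        · have h1 : ((J (X ω) : ℝ)) ≤ f y / δ := by
            rw [← hy]; exact Int.floor_le _
          exact (le_div_iff₀ hδpos).1 h1
        · have h2 : f y / δ < (J (X ω) : ℝ) + 1 := by
            rw [← hy]; exact Int.lt_floor_add_one _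
          exact (div_lt_iff₀ hδpos).1 h2
      obtain ⟨ha1, ha2⟩ := key (X ω) rfl
      obtain ⟨hb1, hb2⟩ := key (Xn n ω) h.symm
      exact (abs_sub_lt_iff.2 ⟨by nlinarith, by nlinarith⟩).le
    · have hω : ω ∈ bad n := h
      rw [Set.indicator_of_mem hω]
      calc |f (X ω) - f (Xn n ω)| ≤ |f (X ω)| + |f (Xn n ω)| := abs_sub _ _
        _ ≤ C + C := add_le_add (hC _) (hC _)
        _ ≤ δ + 2*C := by linarith
  set Jset : Finset ℤ := Finset.Icc ⌊-C/δ⌋ ⌊C/δ⌋ with hJset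
  have hJmem : ∀ x, J x ∈ Jset := by
    intro x
    have h1 : -C ≤ f x := (abs_le.1 (hC x)).1
    have h2 : f x ≤ C := (abs_le.1 (hC x)).2
    rw [hJset, Finset.mem_Icc]
    constructor
    · exact Int.floor_le_floor ((div_le_div_iff_of_pos_right hδpos).2 h1)
    · exact Int.floor_le_floor ((div_le_div_iff_of_pos_right hδpos).2 h2)
  have hsubset : ∀ n, bad n ⊆ ⋃ j ∈ Jset, (X ⁻¹' (J ⁻¹' {j}) ∩ Xn n ⁻¹' (J ⁻¹' {j})ᶜ) := by
    intro n ω hω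
    refine Set.mem_biUnion (hJmem (X ω)) ⟨rfl, fun hmem => ?_⟩
    exact hω (by simpa using hmem.symm)
  have htend : Tendsto (fun n => P (bad n)) atTop (𝓝 0) := by
    have hsum : Tendsto (fun n => ∑ j ∈ Jset, P (X ⁻¹' (J ⁻¹' {j}) ∩ Xn n ⁻¹' (J ⁻¹' {j})ᶜ))
        atTop (𝓝 0) := by
      have := tendsto_finset_sum (f := fun j n => P (X ⁻¹' (J ⁻¹' {j}) ∩ Xn n ⁻¹' (J ⁻¹' {j})ᶜ))
        (a := fun _ => 0) Jset
        (fun j _ => hAll (J ⁻¹' {j}) (hJmeas (measurableSet_singleton j)))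
      simpa using this
    exact tendsto_of_tendsto_of_tendsto_of_le_of_le tendsto_const_nhds hsum (fun n => zero_le)
      (fun n => (measure_mono (hsubset n)).trans (measure_biUnion_finset_le _ _))
  have hreal : Tendsto (fun n => (P (bad n)).toReal) atTop (𝓝 0) := by
    have := (ENNReal.tendsto_toReal_iff (fun n => measure_ne_top P _) ENNReal.zero_ne_top).2 htend
    simpa using this
  have hmul : Tendsto (fun n => 2*C*(P (bad n)).toReal) atTop (𝓝 0) := by
    simpa using hreal.const_mul (2*C)
  have evsmall : ∀ᶠ n in atTop, 2*C*(P (bad n)).toReal < δ := hmul.eventually_lt_const hδpos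
  have hbound : ∀ n, ∫ ω, |f (X ω) - f (Xn n ω)| ∂P ≤ δ + 2*C*(P (bad n)).toReal := by
    intro n
    have hind : Integrable (Set.indicator (bad n) (fun _ => 2*C)) P :=
      (integrable_const (2*C)).indicator (hbadmeas n)
    have hgint : Integrable (fun ω => δ + Set.indicator (bad n) (fun _ => 2*C) ω) P :=
      (integrable_const δ).add hind
    have h1 := integral_mono (hint n) hgint (hpt n)
    have h2 : ∫ ω, (δ + Set.indicator (bad n) (fun _ => 2*C) ω) ∂P
        = δ + (P (bad n)).toReal * (2*C) := by
      rw [integral_add (integrable_const δ) hind, integral_const,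
        integral_indicator_const _ (hbadmeas n)]
      simp [measure_univ, measureReal_def]
    rw [h2] at h1
    linarith [h1]
  obtain ⟨N, hN⟩ := eventually_atTop.1 evsmall
  refine ⟨N, fun n hn => ?_⟩
  have hnonneg : 0 ≤ ∫ ω, |f (X ω) - f (Xn n ω)| ∂P :=
    integral_nonneg (fun ω => abs_nonneg _)
  rw [Real.dist_eq, sub_zero, abs_of_nonneg hnonneg]
  calc ∫ ω, |f (X ω) - f (Xn n ω)| ∂P ≤ δ + 2*C*(P (bad n)).toReal := hbound n
    _ < δ + δ := by linarith [hN n hn]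
    _ = ε := by rw [hδdef]; ring

lemma intOfBdd {Ω : Type*} [MeasurableSpace Ω] (P : Measure Ω) [IsProbabilityMeasure P]
    {g : Ω → ℝ} (hg : Measurable g) {C : ℝ} (hb : ∀ ω, |g ω| ≤ C) : Integrable g P :=
  (integrable_const C).mono' hg.aestronglyMeasurable
    (ae_of_all _ fun ω => by simpa [Real.norm_eq_abs] using hb ω)

theorem stmt1 {Ω E : Type*} [MeasurableSpace Ω] [MeasurableSpace E]
    (P : Measure Ω) [IsProbabilityMeasure P]
    (X : Ω → E) (Xn : ℕ → Ω → E)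
    (hX : Measurable X) (hXn : ∀ n, Measurable (Xn n))
    (𝔖 : Set (Set E)) (h𝔖meas : ∀ S ∈ 𝔖, MeasurableSet S)
    (happrox : ∀ A : Set E, MeasurableSet A → ∀ ε : ℝ≥0∞, 0 < ε →
      ∃ S ∈ 𝔖, P (X ⁻¹' (symmDiff A S)) < ε) :
    ((∀ S ∈ 𝔖,
        Tendsto (fun n => P (X ⁻¹' S ∩ Xn n ⁻¹' Sᶜ)) atTop (𝓝 0)) ∧
      (∀ A : Set E, MeasurableSet A →
        Tendsto (fun n => P (Xn n ⁻¹' A)) atTop (𝓝 (P (X ⁻¹' A)))))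
    ↔ (∀ f : E → ℝ, Measurable f → (∃ C : ℝ, ∀ x, |f x| ≤ C) →
        Tendsto (fun n => ∫ ω, |f (X ω) - f (Xn n ω)| ∂P) atTop (𝓝 0)) := by
  constructor
  · rintro ⟨h1, h2⟩ f hf ⟨C, hC⟩
    exact lemB P X Xn hX hXn (fun A hA => lemA P X Xn 𝔖 h𝔖meas happrox h1 h2 A hA) f hf C hC
  · intro hR
    constructor
    · intro S hS
      have hSm := h𝔖meas S hS
      set f : E → ℝ := Set.indicator S (fun _ => (1:ℝ)) with hfdef
      have hfm : Measurable f := measurable_const.indicator hSm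
      have hb : ∀ x, |f x| ≤ 1 := by
        intro x; by_cases h : x ∈ S <;> simp [hfdef, Set.indicator_apply, h]
      have hu := hR f hfm ⟨1, hb⟩
      set t : ℕ → Set Ω := fun n => X ⁻¹' S ∩ Xn n ⁻¹' Sᶜ with htdef
      have htm : ∀ n, MeasurableSet (t n) := fun n => (hX hSm).inter ((hXn n) hSm.compl)
      have hle : ∀ n, (P (t n)).toReal ≤ ∫ ω, |f (X ω) - f (Xn n ω)| ∂P := by
        intro n
        have hind : ∫ ω, Set.indicator (t n) (fun _ => (1:ℝ)) ω ∂P = (P (t n)).toReal := by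
          rw [integral_indicator_const _ (htm n)]; simp [measureReal_def]
        rw [← hind]
        refine integral_mono ((integrable_const 1).indicator (htm n))
          (((intOfBdd P (hfm.comp hX) (fun ω => hb _)).sub
            (intOfBdd P (hfm.comp (hXn n)) (fun ω => hb _))).abs) (fun ω => ?_)
        by_cases hω : ω ∈ t n
        · rw [Set.indicator_of_mem hω]
          obtain ⟨h1ω, h2ω⟩ := hω
          have e1 : f (X ω) = 1 := Set.indicator_of_mem (Set.mem_preimage.1 h1ω) _
          have e2 : f (Xn n ω) = 0 := Set.indicator_of_notMem (Set.mem_preimage.1 h2ω) _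
          rw [e1, e2]; norm_num
        · rw [Set.indicator_of_notMem hω]
          exact abs_nonneg _
      have hsq : Tendsto (fun n => (P (t n)).toReal) atTop (𝓝 0) :=
        squeeze_zero (fun n => ENNReal.toReal_nonneg) hle hu
      exact (ENNReal.tendsto_toReal_iff (fun n => measure_ne_top P _) ENNReal.zero_ne_top).1
        (by simpa [htdef] using hsq)
    · intro A hA
      set f : E → ℝ := Set.indicator A (fun _ => (1:ℝ)) with hfdef
      have hfm : Measurable f := measurable_const.indicator hA
      have hb : ∀ x, |f x| ≤ 1 := by
        intro x; by_cases h : x ∈ A <;> simp [hfdef, Set.indicator_apply, h]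
      have hu := hR f hfm ⟨1, hb⟩
      have hIX : ∫ ω, f (X ω) ∂P = (P (X ⁻¹' A)).toReal := by
        have heq : (fun ω => f (X ω)) = Set.indicator (X ⁻¹' A) (fun _ => (1:ℝ)) := by
          funext ω; by_cases h : X ω ∈ A <;> simp [hfdef, Set.indicator_apply, h]
        rw [heq, integral_indicator_const _ (hX hA)]; simp [measureReal_def]
      have hIXn : ∀ n, ∫ ω, f (Xn n ω) ∂P = (P (Xn n ⁻¹' A)).toReal := by
        intro n
        have heq : (fun ω => f (Xn n ω)) = Set.indicator (Xn n ⁻¹' A) (fun _ => (1:ℝ)) := by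
          funext ω; by_cases h : Xn n ω ∈ A <;> simp [hfdef, Set.indicator_apply, h]
        rw [heq, integral_indicator_const _ ((hXn n) hA)]; simp [measureReal_def]
      have key : ∀ n, dist (P (Xn n ⁻¹' A)).toReal (P (X ⁻¹' A)).toReal ≤
          ∫ ω, |f (X ω) - f (Xn n ω)| ∂P := by
        intro n
        have hi1 : Integrable (fun ω => f (Xn n ω)) P := intOfBdd P (hfm.comp (hXn n)) (fun ω => hb _)
        have hi2 : Integrable (fun ω => f (X ω)) P := intOfBdd P (hfm.comp hX) (fun ω => hb _)
        rw [Real.dist_eq, ← hIX, ← hIXn n, ← integral_sub hi1 hi2]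
        calc |∫ ω, (f (Xn n ω) - f (X ω)) ∂P| ≤ ∫ ω, ‖f (Xn n ω) - f (X ω)‖ ∂P := by
              simpa [Real.norm_eq_abs] using
                norm_integral_le_integral_norm (fun ω => f (Xn n ω) - f (X ω)) (μ := P)
          _ = ∫ ω, |f (X ω) - f (Xn n ω)| ∂P := by
              simp [Real.norm_eq_abs, abs_sub_comm]
      have hdist : Tendsto (fun n => dist (P (Xn n ⁻¹' A)).toReal (P (X ⁻¹' A)).toReal)
          atTop (𝓝 0) := squeeze_zero (fun n => dist_nonneg) key hu
      have := tendsto_iff_dist_tendsto_zero.2 hdist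
      exact (ENNReal.tendsto_toReal_iff (fun n => measure_ne_top P _) (measure_ne_top P _)).1 this
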